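/- Let c > 0, ε > 0, and let r > 0. For a sequence α_m → 0+, let x_m be the unique solution in (0, ε e^{-r}] of x·(2α_m (x/c)^{1/α_m} + (1 + α_m)) = ε e^{-r}. Then lim_m x_m = c if c ≤ ε e^{-r}, and lim_m x_m = ε e^{-r} if c > ε e^{-r}. -/

import Mathlib

set_option maxHeartbeats 1000000

lemma sq_div_four_le_exp {u : ℝ} (hu : 0 ≤ u) : u ^ 2 / 4 ≤ Real.exp u := by
  have h1 : u / 2 + 1 ≤ Real.exp (u / 2) := Real.add_one_le_exp (u / 2)
  have h2 : Real.exp u = Real.exp (u / 2) * Real.exp (u / 2) := by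
    rw [← Real.exp_add]; ring_nf
  nlinarith [Real.exp_pos (u / 2)]

theorem limit_of_solutions (c ε r : ℝ) (hc : 0 < c) (hε : 0 < ε) (hr : 0 < r)
    (a : ℕ → ℝ) (ha : ∀ m, 0 < a m)
    (ha0 : Filter.Tendsto a Filter.atTop (nhds 0))
    (x : ℕ → ℝ)
    (hx : ∀ m, x m ∈ Set.Ioc (0:ℝ) (ε * Real.exp (-r)))
    (heq : ∀ m, x m * (2 * a m * (x m / c) ^ (1 / a m) + (1 + a m)) = ε * Real.exp (-r)) :
    (c ≤ ε * Real.exp (-r) → Filter.Tendsto x Filter.atTop (nhds c)) ∧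
    (ε * Real.exp (-r) < c → Filter.Tendsto x Filter.atTop (nhds (ε * Real.exp (-r)))) := by
  have hEpos : 0 < ε * Real.exp (-r) := by positivity
  set E := ε * Real.exp (-r) with hE
  clear_value E
  constructor
  · -- case c ≤ E
    intro hcE
    rw [Metric.tendsto_nhds]
    intro δ hδ
    obtain ⟨θ, hθpos, hθhalf, hcθ⟩ :
        ∃ θ : ℝ, 0 < θ ∧ θ ≤ 1 / 2 ∧ c * θ ≤ δ / 2 := by
      refine ⟨min (δ / (2 * c)) (1 / 2), lt_min (by positivity) (by norm_num),
        min_le_right _ _, ?_⟩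
      have h1 : min (δ / (2 * c)) (1 / 2) ≤ δ / (2 * c) := min_le_left _ _
      have h2 : c * (δ / (2 * c)) = δ / 2 := by field_simp
      nlinarith
    have ht1 : (1 : ℝ) < 1 + δ / c := by
      have : 0 < δ / c := by positivity
      linarith
    obtain ⟨L, hL, hLpos⟩ : ∃ L : ℝ, L = Real.log (1 + δ / c) ∧ 0 < L :=
      ⟨_, rfl, Real.log_pos ht1⟩
    have h1 : ∀ᶠ m in Filter.atTop, a m < θ / 3 :=
      ha0.eventually_lt_const (by positivity)
    have h2 : ∀ᶠ m in Filter.atTop, a m < c * L ^ 2 / (2 * E) :=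
      ha0.eventually_lt_const (by positivity)
    filter_upwards [h1, h2] with m hm1 hm2
    have hxm := hx m
    have hxm1 : 0 < x m := hxm.1
    have hxm2 : x m ≤ E := hxm.2
    have ham := ha m
    have hs0 : 0 ≤ (x m / c) ^ (1 / a m) := Real.rpow_nonneg (by positivity) _
    rw [Real.dist_eq, abs_lt]
    constructor
    · -- lower: c - δ < x m, via x m > c * (1 - θ)
      by_contra h
      push_neg at h
      have hcθ0 : 0 < c * θ := mul_pos hc hθpos
      have hxle : x m ≤ c * (1 - θ) := by nlinarith
      have hs1 : (x m / c) ^ (1 / a m) ≤ 1 := by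
        apply Real.rpow_le_one (by positivity)
        · rw [div_le_one hc]; nlinarith
        · positivity
      have hfac : 2 * a m * (x m / c) ^ (1 / a m) + (1 + a m) ≤ 1 + 3 * a m := by
        nlinarith
      have hcmθ : 0 < c * (1 - θ) := by nlinarith
      have hEle : E ≤ c * (1 - θ) * (1 + 3 * a m) := by
        rw [← heq m]
        exact mul_le_mul hxle hfac (by positivity) hcmθ.le
      have hstep : c * (1 - θ) * (1 + 3 * a m) < c * (1 - θ) * (1 + θ) := by
        apply mul_lt_mul_of_pos_left _ hcmθ
        linarith
      nlinarith [mul_pos hc (mul_pos hθpos hθpos)]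
    · -- upper: x m - c < δ, via contradiction with x m ≥ c + δ
      by_contra h
      push_neg at h
      have hxge : c + δ ≤ x m := by linarith
      have hts : 1 + δ / c ≤ x m / c := by
        rw [le_div_iff₀ hc]
        have hid : (1 + δ / c) * c = c + δ := by field_simp
        linarith
      have hsge : (1 + δ / c) ^ (1 / a m) ≤ (x m / c) ^ (1 / a m) :=
        Real.rpow_le_rpow (by positivity) hts (by positivity)
      have htexp : (1 + δ / c) ^ (1 / a m) = Real.exp (L / a m) := by
        rw [Real.rpow_def_of_pos (by linarith), ← hL]; ring_nf
      have hexp : (L / a m) ^ 2 / 4 ≤ Real.exp (L / a m) :=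
        sq_div_four_le_exp (by positivity)
      have hkey : 2 * a m * x m * (x m / c) ^ (1 / a m) ≤ E := by
        rw [← heq m]
        nlinarith [mul_pos hxm1 (show (0:ℝ) < 1 + a m by linarith)]
      have h3 : L ^ 2 / a m ^ 2 / 4 ≤ (x m / c) ^ (1 / a m) := by
        have h4 : (L / a m) ^ 2 = L ^ 2 / a m ^ 2 := by field_simp
        calc L ^ 2 / a m ^ 2 / 4 = (L / a m) ^ 2 / 4 := by rw [h4]
          _ ≤ Real.exp (L / a m) := hexp
          _ = (1 + δ / c) ^ (1 / a m) := htexp.symm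
          _ ≤ _ := hsge
      have hlow : c * L ^ 2 / (2 * a m) ≤ 2 * a m * x m * (x m / c) ^ (1 / a m) := by
        have hc' : c ≤ x m := by linarith
        have h5 : 2 * a m * c * (L ^ 2 / a m ^ 2 / 4) = c * L ^ 2 / (2 * a m) := by
          field_simp; ring
        calc c * L ^ 2 / (2 * a m) = 2 * a m * c * (L ^ 2 / a m ^ 2 / 4) := h5.symm
          _ ≤ 2 * a m * x m * (L ^ 2 / a m ^ 2 / 4) := by gcongr
          _ ≤ 2 * a m * x m * (x m / c) ^ (1 / a m) := by gcongr
      have hbig : E < c * L ^ 2 / (2 * a m) := by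
        rw [lt_div_iff₀ (by positivity)]
        rw [lt_div_iff₀ (by positivity)] at hm2
        nlinarith
      linarith
  · -- case E < c
    intro hEc
    have key : ∀ m, E / (1 + 3 * a m) ≤ x m := by
      intro m
      have hxm := hx m
      have hxm1 : 0 < x m := hxm.1
      have hxm2 : x m ≤ E := hxm.2
      have ham := ha m
      have hs0 : 0 ≤ (x m / c) ^ (1 / a m) := Real.rpow_nonneg (by positivity) _
      have hs1 : (x m / c) ^ (1 / a m) ≤ 1 := by
        apply Real.rpow_le_one (by positivity)
        · rw [div_le_one hc]; linarith
        · positivity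
      rw [div_le_iff₀ (by positivity)]
      calc E = x m * (2 * a m * (x m / c) ^ (1 / a m) + (1 + a m)) := (heq m).symm
        _ ≤ x m * (1 + 3 * a m) := by
          nlinarith [mul_le_mul_of_nonneg_left hs1 (by positivity : (0:ℝ) ≤ 2 * a m * x m)]
    have hden : Filter.Tendsto (fun m => 1 + 3 * a m) Filter.atTop (nhds 1) := by
      have := (ha0.const_mul 3).const_add 1
      simpa using this
    have hlowT : Filter.Tendsto (fun m => E / (1 + 3 * a m)) Filter.atTop (nhds (E / 1)) :=
      Filter.Tendsto.div tendsto_const_nhds hden one_ne_zero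
    rw [div_one] at hlowT
    exact tendsto_of_tendsto_of_tendsto_of_le_of_le hlowT tendsto_const_nhds key
      (fun m => (hx m).2)
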